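/- Let S be a finite set of primes with 2 ∈ S, let k and f be positive integers divisible by no prime of S (in particular k is odd), and let m ∈ ℤ. Then Kl^S_{k,f}(m) = ∏_{p prime, p ∣ kf} Kl_p(v_p(k), v_p(f); m), where v_p denotes the p-adic valuation. -/

import Mathlib

/-- The local generalized Kloosterman sum
`Kl_p(u,v;m) = Σ_{a mod p^{u+2v}, p^{2v} ∣ a²−4m} ((a²−4m)/p^{2v} | p^u)`,
where `(· | ·)` is the Jacobi symbol. -/
noncomputable def Klp (p u v : ℕ) (m : ℤ) : ℤ :=
  ∑ a ∈ Finset.range (p ^ (u + 2*v)),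
    if ((p:ℤ) ^ (2*v) ∣ ((a:ℤ)^2 - 4*m)) then
      jacobiSym (((a:ℤ)^2 - 4*m) / (p:ℤ) ^ (2*v)) (p ^ u)
    else 0

/-- The generalized Kloosterman sum at frequency `0`:
`Kl^S_{k,f}(m) = Σ_{a mod kf², f² ∣ a²−4m} ((a²−4m)/f² | k)`. -/
noncomputable def KlS (k f : ℕ) (m : ℤ) : ℤ :=
  ∑ a ∈ Finset.range (k * f^2),
    if ((f:ℤ)^2 ∣ ((a:ℤ)^2 - 4*m)) then
      jacobiSym (((a:ℤ)^2 - 4*m) / (f:ℤ)^2) k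
    else 0

noncomputable def Kterm (k f : ℕ) (m a : ℤ) : ℤ :=
  if ((f:ℤ)^2 ∣ (a^2 - 4*m)) then jacobiSym ((a^2 - 4*m) / (f:ℤ)^2) k else 0

lemma KlS_eq_sum_Kterm (k f : ℕ) (m : ℤ) :
    KlS k f m = ∑ a ∈ Finset.range (k * f^2), Kterm k f m (a : ℤ) := rfl

lemma Klp_eq_KlS (p u v : ℕ) (m : ℤ) : Klp p u v m = KlS (p^u) (p^v) m := by
  unfold Klp KlS
  have h1 : p ^ u * (p ^ v) ^ 2 = p ^ (u + 2 * v) := by ring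
  have h2 : (((p^v : ℕ)):ℤ)^2 = (p:ℤ) ^ (2 * v) := by push_cast; ring
  rw [h1, h2]

lemma Kterm_congr (k f : ℕ) (hf : f ≠ 0) (m : ℤ) {a b : ℤ}
    (h : ((k:ℤ) * (f:ℤ)^2) ∣ (a - b)) : Kterm k f m a = Kterm k f m b := by
  have hf2ne : ((f:ℤ)^2) ≠ 0 := by positivity
  have hdvd : ((k:ℤ) * (f:ℤ)^2) ∣ ((a^2 - 4*m) - (b^2 - 4*m)) := by
    have he : (a^2 - 4*m) - (b^2 - 4*m) = (a - b) * (a + b) := by ring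
    rw [he]; exact h.mul_right _
  have hf2 : ((f:ℤ)^2) ∣ ((a^2-4*m) - (b^2-4*m)) :=
    dvd_trans (dvd_mul_left _ _) hdvd
  unfold Kterm
  by_cases hA : (f:ℤ)^2 ∣ (a^2 - 4*m)
  · have hB : (f:ℤ)^2 ∣ (b^2 - 4*m) := by
      have := dvd_sub hA hf2
      simpa using this
    rw [if_pos hA, if_pos hB]
    apply jacobiSym.mod_left'
    obtain ⟨x, hx⟩ := hA
    obtain ⟨y, hy⟩ := hB
    have h3 : ((k:ℤ)*(f:ℤ)^2) ∣ (f:ℤ)^2 * (x - y) := by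
      rw [mul_sub, ← hx, ← hy]; exact hdvd
    obtain ⟨c, hc⟩ := h3
    have hxy : x - y = (k:ℤ) * c := by
      apply mul_left_cancel₀ hf2ne
      rw [hc]; ring
    have hmod : (a^2 - 4*m) / (f:ℤ)^2 ≡ (b^2 - 4*m) / (f:ℤ)^2 [ZMOD (k:ℤ)] := by
      rw [hx, hy, Int.mul_ediv_cancel_left _ hf2ne, Int.mul_ediv_cancel_left _ hf2ne]
      exact Int.ModEq.symm (Int.modEq_iff_dvd.mpr ⟨c, hxy⟩)
    exact hmod
  · have hB : ¬ (f:ℤ)^2 ∣ (b^2 - 4*m) := by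
      intro hB
      exact hA (by simpa using dvd_add hB hf2)
    rw [if_neg hA, if_neg hB]

lemma Kterm_mul (k1 f1 k2 f2 : ℕ) (hk1 : k1 ≠ 0) (hk2 : k2 ≠ 0)
    (hf1 : f1 ≠ 0) (hf2 : f2 ≠ 0)
    (hf12 : Nat.Coprime f1 f2) (hf2k1 : Nat.Coprime f2 k1) (hf1k2 : Nat.Coprime f1 k2)
    (m a : ℤ) :
    Kterm (k1*k2) (f1*f2) m a = Kterm k1 f1 m a * Kterm k2 f2 m a := by
  have hne1 : ((f1:ℤ)^2) ≠ 0 := by positivity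
  have hne2 : ((f2:ℤ)^2) ≠ 0 := by positivity
  have hne12 : ((f1:ℤ)^2 * (f2:ℤ)^2) ≠ 0 := mul_ne_zero hne1 hne2
  have hcast : (((f1*f2 : ℕ)):ℤ)^2 = (f1:ℤ)^2 * (f2:ℤ)^2 := by push_cast; ring
  have hco : IsCoprime ((f1:ℤ)^2) ((f2:ℤ)^2) :=
    (Nat.isCoprime_iff_coprime.mpr hf12).pow
  unfold Kterm
  by_cases h1 : (f1:ℤ)^2 ∣ (a^2 - 4*m)
  · by_cases h2 : (f2:ℤ)^2 ∣ (a^2 - 4*m)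
    · have hX : ((f1*f2:ℕ):ℤ)^2 ∣ (a^2 - 4*m) := by
        rw [hcast]; exact hco.mul_dvd h1 h2
      rw [if_pos hX, if_pos h1, if_pos h2]
      obtain ⟨t, ht⟩ : (f1:ℤ)^2 * (f2:ℤ)^2 ∣ (a^2 - 4*m) := hco.mul_dvd h1 h2
      have e0 : (a^2 - 4*m) / ((f1*f2:ℕ):ℤ)^2 = t := by
        rw [hcast, ht, Int.mul_ediv_cancel_left _ hne12]
      have e1 : (a^2 - 4*m) / (f1:ℤ)^2 = (f2:ℤ)^2 * t := by
        rw [ht, mul_assoc, Int.mul_ediv_cancel_left _ hne1]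
      have e2 : (a^2 - 4*m) / (f2:ℤ)^2 = (f1:ℤ)^2 * t := by
        have : (f1:ℤ)^2 * (f2:ℤ)^2 * t = (f2:ℤ)^2 * ((f1:ℤ)^2 * t) := by ring
        rw [ht, this, Int.mul_ediv_cancel_left _ hne2]
      rw [e0, e1, e2]
      haveI : NeZero k1 := ⟨hk1⟩
      haveI : NeZero k2 := ⟨hk2⟩
      rw [jacobiSym.mul_right t k1 k2, jacobiSym.mul_left, jacobiSym.mul_left]
      have j1 : jacobiSym ((f2:ℤ)^2) k1 = 1 := by
        apply jacobiSym.sq_one'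
        rw [Int.gcd_natCast_natCast]
        exact hf2k1
      have j2 : jacobiSym ((f1:ℤ)^2) k2 = 1 := by
        apply jacobiSym.sq_one'
        rw [Int.gcd_natCast_natCast]
        exact hf1k2
      rw [j1, j2]; ring
    · have hX : ¬ ((f1*f2:ℕ):ℤ)^2 ∣ (a^2 - 4*m) := by
        intro h
        rw [hcast] at h
        exact h2 (dvd_trans (dvd_mul_left _ _) h)
      rw [if_neg hX, if_neg h2, mul_zero]
  · have hX : ¬ ((f1*f2:ℕ):ℤ)^2 ∣ (a^2 - 4*m) := by
      intro h
      rw [hcast] at h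
      exact h1 (dvd_trans (dvd_mul_right _ _) h)
    rw [if_neg hX, if_neg h1, zero_mul]

lemma sum_range_eq_sum_zmod (N : ℕ) [NeZero N] (H : ℕ → ℤ) :
    ∑ a ∈ Finset.range N, H a = ∑ x : ZMod N, H x.val := by
  refine Finset.sum_nbij' (fun a => ((a : ℕ) : ZMod N)) (fun x => x.val) ?_ ?_ ?_ ?_ ?_
  · intro a _; exact Finset.mem_univ _
  · intro x _; exact Finset.mem_range.mpr (ZMod.val_lt x)
  · intro a ha; exact ZMod.val_cast_of_lt (Finset.mem_range.mp ha)
  · intro x _; exact ZMod.natCast_rightInverse x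
  · intro a ha; rw [ZMod.val_cast_of_lt (Finset.mem_range.mp ha)]

lemma KlS_mul (k1 f1 k2 f2 : ℕ) (hk1 : k1 ≠ 0) (hk2 : k2 ≠ 0)
    (hf1 : f1 ≠ 0) (hf2 : f2 ≠ 0)
    (h : Nat.Coprime (k1 * f1^2) (k2 * f2^2)) (m : ℤ) :
    KlS (k1*k2) (f1*f2) m = KlS k1 f1 m * KlS k2 f2 m := by
  set N1 := k1 * f1^2 with hN1
  set N2 := k2 * f2^2 with hN2
  have hN1ne : N1 ≠ 0 := by positivity
  have hN2ne : N2 ≠ 0 := by positivity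
  haveI : NeZero N1 := ⟨hN1ne⟩
  haveI : NeZero N2 := ⟨hN2ne⟩
  haveI : NeZero (N1 * N2) := ⟨mul_ne_zero hN1ne hN2ne⟩
  -- coprimality facts
  have hck1 : ∀ d : ℕ, d ∣ N1 → ∀ e : ℕ, e ∣ N2 → Nat.Coprime d e := by
    intro d hd e he
    exact Nat.Coprime.coprime_dvd_right he (Nat.Coprime.coprime_dvd_left hd h)
  have hf12 : Nat.Coprime f1 f2 :=
    hck1 f1 (dvd_mul_of_dvd_right (dvd_pow_self f1 two_ne_zero) k1) f2
      (dvd_mul_of_dvd_right (dvd_pow_self f2 two_ne_zero) k2)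
  have hf2k1 : Nat.Coprime f2 k1 :=
    (hck1 k1 (dvd_mul_right _ _) f2
      (dvd_mul_of_dvd_right (dvd_pow_self f2 two_ne_zero) k2)).symm
  have hf1k2 : Nat.Coprime f1 k2 :=
    hck1 f1 (dvd_mul_of_dvd_right (dvd_pow_self f1 two_ne_zero) k1) k2 (dvd_mul_right _ _)
  have hrange : (k1*k2) * (f1*f2)^2 = N1 * N2 := by rw [hN1, hN2]; ring
  rw [KlS_eq_sum_Kterm, KlS_eq_sum_Kterm, KlS_eq_sum_Kterm, hrange]
  have hsplit : ∀ a : ℕ, Kterm (k1*k2) (f1*f2) m (a:ℤ) = Kterm k1 f1 m a * Kterm k2 f2 m a :=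
    fun a => Kterm_mul k1 f1 k2 f2 hk1 hk2 hf1 hf2 hf12 hf2k1 hf1k2 m a
  calc ∑ a ∈ Finset.range (N1 * N2), Kterm (k1*k2) (f1*f2) m (a:ℤ)
      = ∑ a ∈ Finset.range (N1 * N2), Kterm k1 f1 m (a:ℤ) * Kterm k2 f2 m (a:ℤ) := by
        exact Finset.sum_congr rfl fun a _ => hsplit a
    _ = ∑ x : ZMod (N1 * N2), Kterm k1 f1 m (x.val : ℤ) * Kterm k2 f2 m (x.val : ℤ) :=
        sum_range_eq_sum_zmod (N1 * N2) _
    _ = ∑ p : ZMod N1 × ZMod N2,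
          Kterm k1 f1 m ((((ZMod.chineseRemainder h).symm p).val : ℕ) : ℤ) *
          Kterm k2 f2 m ((((ZMod.chineseRemainder h).symm p).val : ℕ) : ℤ) := by
        exact (Equiv.sum_comp (ZMod.chineseRemainder h).toEquiv.symm
          (fun x : ZMod (N1*N2) => Kterm k1 f1 m (x.val : ℤ) * Kterm k2 f2 m (x.val : ℤ))).symm
    _ = ∑ p : ZMod N1 × ZMod N2, Kterm k1 f1 m (p.1.val : ℤ) * Kterm k2 f2 m (p.2.val : ℤ) := by
        apply Finset.sum_congr rfl
        intro p _
        set w := (ZMod.chineseRemainder h).symm p with hw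
        have hew : (ZMod.chineseRemainder h) w = p := (ZMod.chineseRemainder h).apply_symm_apply p
        have h1' : ((w.val : ℕ) : ZMod N1) = p.1 := by
          have := congrArg Prod.fst hew
          rw [ZMod.chineseRemainder] at this
          simpa [ZMod.castHom_apply, ZMod.natCast_val] using this
        have h2' : ((w.val : ℕ) : ZMod N2) = p.2 := by
          have := congrArg Prod.snd hew
          rw [ZMod.chineseRemainder] at this
          simpa [ZMod.castHom_apply, ZMod.natCast_val] using this
        have d1 : ((k1:ℤ) * (f1:ℤ)^2) ∣ ((w.val : ℤ) - (p.1.val : ℤ)) := by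
          have hmodn : w.val % N1 = p.1.val % N1 := by
            conv_rhs => rw [← h1']
            rw [ZMod.val_natCast]
            exact (Nat.mod_mod_of_dvd _ dvd_rfl).symm
          have : ((N1 : ℤ)) ∣ ((w.val : ℤ) - (p.1.val : ℤ)) := by
            rw [Int.dvd_iff_emod_eq_zero, Int.sub_emod]
            rw [← Int.natCast_mod, ← Int.natCast_mod, hmodn]
            simp
          convert this using 1
          exact_mod_cast hN1.symm
        have d2 : ((k2:ℤ) * (f2:ℤ)^2) ∣ ((w.val : ℤ) - (p.2.val : ℤ)) := by
          have hmodn : w.val % N2 = p.2.val % N2 := by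
            conv_rhs => rw [← h2']
            rw [ZMod.val_natCast]
            exact (Nat.mod_mod_of_dvd _ dvd_rfl).symm
          have : ((N2 : ℤ)) ∣ ((w.val : ℤ) - (p.2.val : ℤ)) := by
            rw [Int.dvd_iff_emod_eq_zero, Int.sub_emod]
            rw [← Int.natCast_mod, ← Int.natCast_mod, hmodn]
            simp
          convert this using 1
          exact_mod_cast hN2.symm
        rw [Kterm_congr k1 f1 hf1 m d1, Kterm_congr k2 f2 hf2 m d2]
    _ = (∑ x : ZMod N1, Kterm k1 f1 m (x.val : ℤ)) * (∑ y : ZMod N2, Kterm k2 f2 m (y.val : ℤ)) := by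
        rw [Finset.sum_mul_sum]
        rw [← Finset.sum_product']
        rfl
    _ = (∑ a ∈ Finset.range N1, Kterm k1 f1 m (a:ℤ)) * (∑ a ∈ Finset.range N2, Kterm k2 f2 m (a:ℤ)) := by
        rw [sum_range_eq_sum_zmod N1, sum_range_eq_sum_zmod N2]

lemma KlS_one_one (m : ℤ) : KlS 1 1 m = 1 := by
  unfold KlS
  simp [jacobiSym.one_right]

lemma KlS_eq_prod (m : ℤ) : ∀ n : ℕ, ∀ k f : ℕ, k ≠ 0 → f ≠ 0 → k * f = n →
    KlS k f m = ∏ p ∈ (k*f).primeFactors, Klp p (k.factorization p) (f.factorization p) m := by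
  intro n
  induction n using Nat.strong_induction_on with
  | _ n ih =>
    intro k f hk hf hkf
    rcases eq_or_ne (k*f) 1 with h1 | h1
    · have hk1 : k = 1 := Nat.eq_one_of_mul_eq_one_right h1
      have hf1 : f = 1 := Nat.eq_one_of_mul_eq_one_left h1
      subst hk1; subst hf1
      simpa using KlS_one_one m
    · set p := (k*f).minFac with hp_def
      have hp : p.Prime := Nat.minFac_prime h1
      haveI : Fact p.Prime := ⟨hp⟩
      have hpdvd : p ∣ k * f := Nat.minFac_dvd _
      set α := k.factorization p with hα
      set β := f.factorization p with hβ
      set k' := k / p ^ α with hk'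
      set f' := f / p ^ β with hf'
      have hkk : p ^ α * k' = k := Nat.ordProj_mul_ordCompl_eq_self k p
      have hff : p ^ β * f' = f := Nat.ordProj_mul_ordCompl_eq_self f p
      have hk'ne : k' ≠ 0 := by
        intro h0; rw [h0, mul_zero] at hkk; exact hk hkk.symm
      have hf'ne : f' ≠ 0 := by
        intro h0; rw [h0, mul_zero] at hff; exact hf hff.symm
      have hpk' : ¬ p ∣ k' := Nat.not_dvd_ordCompl hp hk
      have hpf' : ¬ p ∣ f' := Nat.not_dvd_ordCompl hp hf
      have hpk'f' : ¬ p ∣ k' * f' := by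
        intro hd
        rcases (Nat.Prime.dvd_mul hp).mp hd with h | h
        · exact hpk' h
        · exact hpf' h
      have hαβpos : 0 < α + β := by
        rcases (Nat.Prime.dvd_mul hp).mp hpdvd with h | h
        · have := Nat.Prime.factorization_pos_of_dvd hp hk h
          omega
        · have := Nat.Prime.factorization_pos_of_dvd hp hf h
          omega
      have hcop : Nat.Coprime (p ^ α * (p ^ β) ^ 2) (k' * f' ^ 2) := by
        have : ¬ p ∣ k' * f' ^ 2 := by
          intro hd
          rcases (Nat.Prime.dvd_mul hp).mp hd with h | h
          · exact hpk' h
          · exact hpf' (hp.dvd_of_dvd_pow h)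
        have hbase : Nat.Coprime p (k' * f' ^ 2) := (Nat.Prime.coprime_iff_not_dvd hp).mpr this
        have : p ^ α * (p ^ β) ^ 2 = p ^ (α + 2 * β) := by ring
        rw [this]
        exact Nat.Coprime.pow_left _ hbase
      have hmul : KlS k f m = KlS (p^α) (p^β) m * KlS k' f' m := by
        rw [← hkk, ← hff]
        exact KlS_mul (p^α) (p^β) k' f' (pow_ne_zero _ hp.ne_zero) hk'ne
          (pow_ne_zero _ hp.ne_zero) hf'ne hcop m
      have hkffac : k * f = p ^ (α + β) * (k' * f') := by
        rw [← hkk, ← hff]; ring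
      have hlt : k' * f' < n := by
        rw [← hkf, hkffac]
        have h2 : 2 ≤ p ^ (α + β) := by
          calc 2 ≤ p := hp.two_le
          _ ≤ p ^ (α + β) := Nat.le_self_pow (by omega) p
        have hpos : 0 < k' * f' := Nat.pos_of_ne_zero (Nat.mul_ne_zero hk'ne hf'ne)
        calc k' * f' = 1 * (k' * f') := (one_mul _).symm
          _ < p ^ (α + β) * (k' * f') := by
              exact Nat.mul_lt_mul_of_lt_of_le (by omega) le_rfl hpos
      have hrec := ih (k' * f') hlt k' f' hk'ne hf'ne rfl
      have hpf_eq : (k*f).primeFactors = insert p ((k'*f').primeFactors) := by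
        rw [hkffac, Nat.primeFactors_mul (pow_ne_zero _ hp.ne_zero) (Nat.mul_ne_zero hk'ne hf'ne),
          Nat.primeFactors_prime_pow (by omega) hp, Finset.insert_eq]
      have hpnotmem : p ∉ (k'*f').primeFactors := by
        intro hmem
        exact hpk'f' (Nat.dvd_of_mem_primeFactors hmem)
      rw [hpf_eq, Finset.prod_insert hpnotmem, hmul, ← Klp_eq_KlS, hrec]
      congr 1
      apply Finset.prod_congr rfl
      intro q hq
      have hqp : q ≠ p := fun h => hpnotmem (h ▸ hq)
      have hkq : k.factorization q = k'.factorization q := by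
        conv_lhs => rw [← hkk]
        rw [Nat.factorization_mul (pow_ne_zero _ hp.ne_zero) hk'ne]
        simp [Nat.factorization_pow]
        exact Or.inr (by rw [hp.factorization, Finsupp.single_apply]; exact if_neg (fun h => hqp h.symm))
      have hfq : f.factorization q = f'.factorization q := by
        conv_lhs => rw [← hff]
        rw [Nat.factorization_mul (pow_ne_zero _ hp.ne_zero) hf'ne]
        simp [Nat.factorization_pow]
        exact Or.inr (by rw [hp.factorization, Finsupp.single_apply]; exact if_neg (fun h => hqp h.symm))
      rw [hkq, hfq]

theorem stmt6 (S : Finset ℕ) (hS : ∀ q ∈ S, Nat.Prime q) (h2 : 2 ∈ S)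
    (k f : ℕ) (hk : 0 < k) (hf : 0 < f)
    (hkS : ∀ q ∈ S, ¬ q ∣ k) (hfS : ∀ q ∈ S, ¬ q ∣ f) (m : ℤ) :
    KlS k f m =
      ∏ p ∈ (k * f).primeFactors, Klp p (k.factorization p) (f.factorization p) m :=
  KlS_eq_prod m (k*f) k f hk.ne' hf.ne' rfl
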